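/- Let V be a d×d positive definite real matrix, let X_1, …, X_n ∈ ℝ^d, and define V_t = V + Σ_{s=1}^t X_s X_sᵀ for t = 0, 1, …, n. Then Σ_{t=1}^n min{1, √(X_tᵀ V_{t-1}⁻¹ X_t)} ≤ √(2n·(log det(V_n) − log det(V))). -/

import Mathlib

open Matrix

/-- Square-root elliptical potential bound:
`∑ₜ min {1, √(Xₜᵀ Vₜ₋₁⁻¹ Xₜ)} ≤ √(2n (log det Vₙ − log det V))`, where
`Vₜ = V + ∑_{s<t} X_s X_sᵀ` (vectors indexed from `0`). -/
theorem sum_min_sqrt_quadratic_le {d : ℕ} (V : Matrix (Fin d) (Fin d) ℝ)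
    (hV : V.PosDef) (n : ℕ) (X : ℕ → (Fin d → ℝ))
    (W : ℕ → Matrix (Fin d) (Fin d) ℝ)
    (hW : ∀ t, W t = V + ∑ s ∈ Finset.range t, vecMulVec (X s) (X s)) :
    ∑ t ∈ Finset.range n, min 1 (Real.sqrt (X t ⬝ᵥ ((W t)⁻¹ *ᵥ X t))) ≤
      Real.sqrt (2 * n * (Real.log (W n).det - Real.log V.det)) := by
  classical
  set Q : ℕ → ℝ := fun t => X t ⬝ᵥ ((W t)⁻¹ *ᵥ X t) with hQdef
  have hWpd : ∀ t, (W t).PosDef := by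
    intro t
    rw [hW t]
    refine hV.add_posSemidef ?_
    refine Finset.sum_induction _ _ (fun a b ha hb => ha.add hb) Matrix.PosSemidef.zero ?_
    intro s _
    have h : vecMulVec (X s) (X s) = (Matrix.replicateRow Unit (X s))ᴴ * Matrix.replicateRow Unit (X s) := by
      rw [Matrix.conjTranspose_replicateRow, star_trivial, Matrix.vecMulVec_eq Unit]
    rw [h]
    exact Matrix.posSemidef_conjTranspose_mul_self _
  have hQ0 : ∀ t, 0 ≤ Q t := by
    intro t
    simpa using (hWpd t).inv.posSemidef.dotProduct_mulVec_nonneg (X t)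
  have hdet : ∀ t, (W (t + 1)).det = (W t).det * (1 + Q t) := by
    intro t
    have h1 : W (t + 1) = W t + Matrix.replicateCol Unit (X t) * Matrix.replicateRow Unit (X t) := by
      rw [hW (t + 1), hW t, Finset.sum_range_succ, ← add_assoc, Matrix.vecMulVec_eq Unit]
    rw [h1, Matrix.det_add_replicateCol_mul_replicateRow (hWpd t).det_pos.ne'.isUnit]
    congr 1
    rw [Matrix.det_unique]
    simp only [Pi.add_apply, Matrix.one_apply_eq, Matrix.mul_apply, Matrix.replicateRow_apply,
      Matrix.replicateCol_apply, hQdef, dotProduct, Matrix.mulVec, Matrix.add_apply]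
    congr 1
    simp only [Finset.sum_mul, Finset.mul_sum]
    rw [Finset.sum_comm]
    exact Finset.sum_congr rfl fun i _ => Finset.sum_congr rfl fun j _ => by ring
  have hlog : Real.log (W n).det - Real.log V.det
      = ∑ t ∈ Finset.range n, Real.log (1 + Q t) := by
    induction n with
    | zero => simp [hW 0]
    | succ t ih =>
      have hne : (1 : ℝ) + Q t ≠ 0 := by have := hQ0 t; positivity
      rw [Finset.sum_range_succ, ← ih, hdet t, Real.log_mul (hWpd t).det_pos.ne' hne]
      ring
  -- key scalar inequality
  have key : ∀ u : ℝ, 0 ≤ u → min 1 u ≤ 2 * Real.log (1 + u) := by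
    intro u hu
    rcases le_total u 1 with h | h
    · rw [min_eq_right h]
      have h1u : (0 : ℝ) < 1 + u := by linarith
      have hlb : 1 - (1 + u)⁻¹ ≤ Real.log (1 + u) := Real.one_sub_inv_le_log_of_pos h1u
      have heq : 1 - (1 + u)⁻¹ = u / (1 + u) := by field_simp; ring
      have h2 : u ≤ 2 * (u / (1 + u)) := by
        rw [← mul_div_assoc, le_div_iff₀ h1u]
        nlinarith
      linarith [heq ▸ hlb]
    · rw [min_eq_left h]
      have h2 : Real.log 2 ≤ Real.log (1 + u) := Real.log_le_log (by norm_num) (by linarith)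
      linarith [Real.log_two_gt_d9]
  have hmin : ∀ q : ℝ, 0 ≤ q → min 1 (Real.sqrt q) = Real.sqrt (min 1 q) := by
    intro q hq
    rcases le_total q 1 with h | h
    · rw [min_eq_right h, min_eq_right]
      nlinarith [Real.sq_sqrt hq, Real.sqrt_nonneg q]
    · rw [min_eq_left h, min_eq_left, Real.sqrt_one]
      rw [show (1 : ℝ) = Real.sqrt 1 by simp]
      exact Real.sqrt_le_sqrt (by simpa using h)
  set m : ℕ → ℝ := fun t => min 1 (Q t) with hm
  have hm0 : ∀ t, 0 ≤ m t := fun t => le_min one_pos.le (hQ0 t)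
  -- Cauchy–Schwarz step
  have hCS : ∑ t ∈ Finset.range n, Real.sqrt (m t)
      ≤ Real.sqrt (n * ∑ t ∈ Finset.range n, m t) := by
    have := Real.sum_mul_le_sqrt_mul_sqrt (Finset.range n)
      (fun _ => (1 : ℝ)) (fun t => Real.sqrt (m t))
    simp only [one_mul, one_pow, Finset.sum_const, Finset.card_range, nsmul_eq_mul,
      mul_one] at this
    calc ∑ t ∈ Finset.range n, Real.sqrt (m t)
        ≤ Real.sqrt n * Real.sqrt (∑ t ∈ Finset.range n, Real.sqrt (m t) ^ 2) := this
      _ = Real.sqrt (n * ∑ t ∈ Finset.range n, m t) := by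
          rw [← Real.sqrt_mul (by positivity)]
          congr 2
          exact Finset.sum_congr rfl fun t _ => Real.sq_sqrt (hm0 t)
  have hsum : ∑ t ∈ Finset.range n, m t
      ≤ 2 * (Real.log (W n).det - Real.log V.det) := by
    rw [hlog, Finset.mul_sum]
    exact Finset.sum_le_sum fun t _ => key (Q t) (hQ0 t)
  calc ∑ t ∈ Finset.range n, min 1 (Real.sqrt (Q t))
      = ∑ t ∈ Finset.range n, Real.sqrt (m t) :=
        Finset.sum_congr rfl fun t _ => hmin (Q t) (hQ0 t)
    _ ≤ Real.sqrt (n * ∑ t ∈ Finset.range n, m t) := hCS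
    _ ≤ Real.sqrt (2 * n * (Real.log (W n).det - Real.log V.det)) := by
        apply Real.sqrt_le_sqrt
        have hsn : (0 : ℝ) ≤ n := Nat.cast_nonneg n
        calc (n : ℝ) * ∑ t ∈ Finset.range n, m t
            ≤ n * (2 * (Real.log (W n).det - Real.log V.det)) :=
              mul_le_mul_of_nonneg_left hsum hsn
          _ = 2 * n * (Real.log (W n).det - Real.log V.det) := by ring
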